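/- Let G be a simple graph and G_• the graph obtained by adding a sink v_0 adjacent to all vertices of G. The set of indegree sequences of acyclic partial orientations of G equals the set of parking functions of G_• with respect to v_0. -/

import Mathlib

open Finset SimpleGraph
open scoped Classical

variable {V : Type*} [Fintype V] [DecidableEq V]

/-- `O` is a partial orientation of `G`: a set of steps along edges of `G`,
containing at most one direction per edge. -/
def IsPO (G : SimpleGraph V) (O : Finset (V × V)) : Prop :=
  ∀ p ∈ O, G.Adj p.1 p.2 ∧ (p.2, p.1) ∉ O

/-- A total orientation orients every edge. -/
def IsTotalOn (G : SimpleGraph V) (O : Finset (V × V)) : Prop :=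
  ∀ u v : V, G.Adj u v → (u, v) ∈ O ∨ (v, u) ∈ O

/-- `O` contains a directed cycle of steps. -/
def HasDirCycle (O : Finset (V × V)) : Prop :=
  ∃ (k : ℕ) (c : Fin (k + 1) → V), 1 ≤ k ∧ Function.Injective c ∧
    ∀ i : Fin (k + 1), (c i, c (i + 1)) ∈ O

/-- An acyclic partial orientation. -/
def IsAcyclicPO (G : SimpleGraph V) (O : Finset (V × V)) : Prop :=
  IsPO G O ∧ ¬ HasDirCycle O

/-- Indegree of vertex `v` in the orientation `O`. -/
def indeg (O : Finset (V × V)) (v : V) : ℕ := (O.filter (fun p => p.2 = v)).card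

/-- A potential cycle for `O`: a directed cycle of steps, each compatible with `O`
(i.e. whose reversal is not in `O`). -/
def IsPotCycle (G : SimpleGraph V) (O : Finset (V × V)) {k : ℕ} (c : Fin (k + 1) → V) : Prop :=
  1 ≤ k ∧ Function.Injective c ∧
    ∀ i : Fin (k + 1), G.Adj (c i) (c (i + 1)) ∧ (c (i + 1), c i) ∉ O

/-- Score of a step compatible with `O`, with respect to the parameter list `a`. -/
def stepScore (a : V → V → ℝ) (O : Finset (V × V)) (p : V × V) : ℝ :=
  if p ∈ O then -(a p.2 p.1) else a p.1 p.2

/-- Score of a potential cycle. -/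
def cycScore (a : V → V → ℝ) (O : Finset (V × V)) {k : ℕ} (c : Fin (k + 1) → V) : ℝ :=
  ∑ i : Fin (k + 1), stepScore a O (c i, c (i + 1))

/-- `O` is `a`-admissible: every potential cycle has strictly positive score. -/
def IsAdmissible (G : SimpleGraph V) (a : V → V → ℝ) (O : Finset (V × V)) : Prop :=
  ∀ (k : ℕ) (c : Fin (k + 1) → V), IsPotCycle G O c → 0 < cycScore a O c

/-- `O` is almost-`a`-admissible: not admissible, but no potential cycle has negative score. -/
def IsAlmostAdmissible (G : SimpleGraph V) (a : V → V → ℝ) (O : Finset (V × V)) : Prop :=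
  ¬ IsAdmissible G a O ∧
    ∀ (k : ℕ) (c : Fin (k + 1) → V), IsPotCycle G O c → 0 ≤ cycScore a O c

/-- The parameter list condition: the central region of `Σ_G(A)` is nonempty. -/
def HasCentral (G : SimpleGraph V) (a : V → V → ℝ) : Prop :=
  ∃ x : V → ℝ, ∀ u v : V, G.Adj u v → x u - x v < a u v

/-- Number of edges of `G_•` from `i` to vertices outside `W` (including the edge to the sink). -/
noncomputable def dW (G : SimpleGraph V) (W : Finset V) (i : V) : ℕ :=
  1 + (Finset.univ.filter (fun u => u ∉ W ∧ G.Adj i u)).card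

/-- `c` is a parking function of `G_•` with respect to the added sink `v₀`. -/
def IsPF (G : SimpleGraph V) (c : V → ℤ) : Prop :=
  ∀ W : Finset V, W.Nonempty → ∃ i ∈ W, 0 ≤ c i ∧ c i < dW G W i

/-- Every nonempty `W` contains a vertex with no incoming `O`-step from inside `W`,
when `O` is acyclic. -/
lemma exists_source (G : SimpleGraph V) (O : Finset (V × V)) (h : IsAcyclicPO G O)
    (W : Finset V) (hW : W.Nonempty) : ∃ i ∈ W, ∀ u, (u, i) ∈ O → u ∉ W := by
  by_contra hcon
  push_neg at hcon
  obtain ⟨x0, hx0⟩ := hW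
  have hf : ∀ i : V, ∃ u, i ∈ W → ((u, i) ∈ O ∧ u ∈ W) := by
    intro i
    by_cases hi : i ∈ W
    · obtain ⟨u, hu1, hu2⟩ := hcon i hi
      exact ⟨u, fun _ => ⟨hu1, hu2⟩⟩
    · exact ⟨i, fun h' => absurd h' hi⟩
  choose f hfspec using hf
  set g : ℕ → V := fun n => f^[n] x0 with hg
  have hgsucc : ∀ n, g (n + 1) = f (g n) := by
    intro n; simp [hg, Function.iterate_succ_apply']
  have hgW : ∀ n, g n ∈ W := by
    intro n
    induction n with
    | zero => simpa [hg] using hx0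
    | succ n ih => rw [hgsucc]; exact (hfspec (g n) ih).2
  have hstep : ∀ n, (g (n + 1), g n) ∈ O := by
    intro n; rw [hgsucc]; exact (hfspec (g n) (hgW n)).1
  have hP : ∃ n, ∃ m, m < n ∧ g m = g n := by
    obtain ⟨a, b, hab, heq⟩ := Finite.exists_ne_map_eq_of_infinite g
    rcases lt_or_gt_of_ne hab with hlt | hlt
    · exact ⟨b, a, hlt, heq⟩
    · exact ⟨a, b, hlt, heq.symm⟩
  set m' := Nat.find hP with hm'def
  obtain ⟨m, hmm', hgm⟩ := Nat.find_spec hP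
  have hmin : ∀ n, n < m' → ¬ ∃ j, j < n ∧ g j = g n := fun n hn => Nat.find_min hP hn
  have hinj : ∀ a b, a < m' → b < m' → g a = g b → a = b := by
    intro a b ha hb heq
    rcases lt_trichotomy a b with h1 | h1 | h1
    · exact absurd ⟨a, h1, heq⟩ (hmin b hb)
    · exact h1
    · exact absurd ⟨b, h1, heq.symm⟩ (hmin a ha)
  have hk2 : m + 2 ≤ m' := by
    by_contra hlt
    have hm1 : m' = m + 1 := by omega
    have : (g (m + 1), g m) ∈ O := hstep m
    rw [← hm1, ← hgm] at this
    exact (h.1 _ this).1.ne rfl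
  set K := m' - m - 2 + 1 with hKdef
  have hK1 : K + 1 = m' - m := by omega
  refine h.2 ⟨K, fun j => g (m' - 1 - j.val), by omega, ?_, ?_⟩
  · intro a b heq
    have ha : a.val ≤ K := by omega
    have hb : b.val ≤ K := by omega
    have := hinj _ _ (by omega) (by omega) heq
    exact Fin.ext (by omega)
  · intro j
    have hjK : j.val ≤ K := by omega
    have hval := Fin.val_add_one j
    by_cases hj : j = Fin.last K
    · have h0 : (j + 1).val = 0 := by rw [hval, if_pos hj]
      have hj : j.val = K := by rw [hj]; rfl
      simp only [h0, hj]
      have e1 : m' - 1 - K = m := by omega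
      have e2 : m' - 1 - 0 = m' - 1 := by omega
      rw [e1, e2, hgm]
      have := hstep (m' - 1)
      rwa [show m' - 1 + 1 = m' by omega] at this
    · have h0 : (j + 1).val = j.val + 1 := by rw [hval, if_neg hj]
      have hj : j.val ≠ K := fun h => hj (Fin.ext h)
      simp only [h0]
      have e1 : m' - 1 - j.val = (m' - 1 - (j.val + 1)) + 1 := by omega
      rw [e1]
      exact hstep _

/-- Indegrees of acyclic partial orientations are parking functions. -/
lemma indeg_isPF (G : SimpleGraph V) (O : Finset (V × V)) (h : IsAcyclicPO G O)
    (c : V → ℤ) (hc : ∀ v : V, c v = indeg O v) : IsPF G c := by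
  intro W hW
  obtain ⟨i, hiW, hsrc⟩ := exists_source G O h W hW
  refine ⟨i, hiW, ?_, ?_⟩
  · rw [hc]; positivity
  rw [hc]
  have hle : indeg O i ≤ (Finset.univ.filter (fun u => u ∉ W ∧ G.Adj i u)).card := by
    apply Finset.card_le_card_of_injOn Prod.fst
    · intro p hp
      simp only [Finset.mem_coe, Finset.mem_filter] at hp ⊢
      obtain ⟨hpO, hpi⟩ := hp
      have hadj := (h.1 p hpO).1
      have hp1 : (p.1, i) ∈ O := by rwa [← hpi, Prod.mk.eta]
      have hadji : G.Adj p.1 i := by rwa [hpi] at hadj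
      exact ⟨Finset.mem_univ _, hsrc p.1 hp1, hadji.symm⟩
    · intro p hp q hq hpq
      simp only [Finset.coe_filter, Set.mem_setOf_eq] at hp hq
      exact Prod.ext hpq (hp.2.trans hq.2.symm)
  unfold dW
  have : (indeg O i : ℤ) ≤ ((Finset.univ.filter (fun u => u ∉ W ∧ G.Adj i u)).card : ℤ) :=
    Int.ofNat_le.mpr hle
  push_cast
  linarith

/-- The inductive construction: process vertices of `W` one by one. -/
lemma build (G : SimpleGraph V) (c : V → ℤ) (hc : IsPF G c) :
    ∀ n (W : Finset V), W.card = n →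
    (∃ (O : Finset (V × V)) (r : V → ℕ), IsPO G O ∧
      (∀ p ∈ O, p.1 ∉ W ∧ p.2 ∉ W ∧ r p.1 < r p.2) ∧ ∀ v ∉ W, c v = (indeg O v : ℤ)) →
    ∃ (O : Finset (V × V)) (r : V → ℕ), IsPO G O ∧
      (∀ p ∈ O, r p.1 < r p.2) ∧ ∀ v : V, c v = (indeg O v : ℤ) := by
  intro n
  induction n with
  | zero =>
    intro W hWcard ⟨O, r, hPO, hsteps, hindeg⟩
    rw [Finset.card_eq_zero] at hWcard
    subst hWcard
    exact ⟨O, r, hPO, fun p hp => (hsteps p hp).2.2,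
      fun v => hindeg v (Finset.notMem_empty v)⟩
  | succ n ih =>
    intro W hWcard ⟨O, r, hPO, hsteps, hindeg⟩
    have hW : W.Nonempty := Finset.card_pos.mp (by omega)
    obtain ⟨i, hiW, hci0, hcid⟩ := hc W hW
    set N := Finset.univ.filter (fun u => u ∉ W ∧ G.Adj i u) with hN
    have hciN : (c i).toNat ≤ N.card := by
      have h1 : c i < 1 + (N.card : ℤ) := by
        rw [hN]; unfold dW at hcid; exact_mod_cast hcid
      omega
    obtain ⟨S, hSN, hScard⟩ := Finset.exists_subset_card_eq hciN
    set M := Finset.univ.sup r with hM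
    set img := S.image (fun u => (u, i)) with himg
    set O' := O ∪ img with hO'
    set r' : V → ℕ := fun v => if v = i then M + 1 else r v with hr'
    have hSfacts : ∀ u ∈ S, u ∉ W ∧ G.Adj i u := by
      intro u hu
      have := hSN hu
      rw [hN, Finset.mem_filter] at this
      exact this.2
    have hOsnd : ∀ p ∈ O, p.2 ≠ i := fun p hp => fun he =>
      (hsteps p hp).2.1 (he ▸ hiW)
    have hOfst : ∀ p ∈ O, p.1 ≠ i := fun p hp => fun he =>
      (hsteps p hp).1 (he ▸ hiW)
    have himgmem : ∀ p : V × V, p ∈ img ↔ p.1 ∈ S ∧ p.2 = i := by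
      intro p
      rw [himg, Finset.mem_image]
      constructor
      · rintro ⟨u, hu, rfl⟩; exact ⟨hu, rfl⟩
      · rintro ⟨h1, h2⟩; exact ⟨p.1, h1, by rw [← h2]⟩
    have hPO' : IsPO G O' := by
      intro p hp
      rw [hO', Finset.mem_union] at hp
      rcases hp with hp | hp
      · refine ⟨(hPO p hp).1, ?_⟩
        rw [hO', Finset.mem_union]
        rintro (h' | h')
        · exact (hPO p hp).2 h'
        · rw [himgmem] at h'
          exact hOfst p hp h'.2
      · rw [himgmem] at hp
        refine ⟨?_, ?_⟩
        · have := (hSfacts p.1 hp.1).2.symm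
          rwa [hp.2]
        · rw [hO', Finset.mem_union]
          rintro (h' | h')
          · exact (hsteps _ h').1 (by rw [hp.2]; exact hiW)
          · rw [himgmem] at h'
            have : p.1 = i := h'.2
            exact ((hSfacts p.1 hp.1).2.ne this.symm)
    have hindegO : indeg O i = 0 := by
      unfold indeg
      rw [Finset.card_eq_zero, Finset.filter_eq_empty_iff]
      intro p hp
      exact hOsnd p hp
    refine ih (W.erase i) (by rw [Finset.card_erase_of_mem hiW, hWcard]; omega) ⟨O', r', hPO', ?_, ?_⟩
    · intro p hp
      rw [hO', Finset.mem_union] at hp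
      rcases hp with hp | hp
      · have h1 := hsteps p hp
        refine ⟨fun h' => h1.1 (Finset.mem_of_mem_erase h'),
          fun h' => h1.2.1 (Finset.mem_of_mem_erase h'), ?_⟩
        rw [hr']
        simp only [if_neg (hOfst p hp), if_neg (hOsnd p hp)]
        exact h1.2.2
      · rw [himgmem] at hp
        have hu := hSfacts p.1 hp.1
        refine ⟨fun h' => hu.1 (Finset.mem_of_mem_erase h'),
          hp.2 ▸ Finset.notMem_erase i W, ?_⟩
        rw [hr']
        simp only [if_neg (hu.2.ne'), hp.2, if_pos]
        exact Nat.lt_succ_of_le (Finset.le_sup (Finset.mem_univ p.1))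
    · intro v hv
      by_cases hvi : v = i
      · subst hvi
        have hfilt : O'.filter (fun p => p.2 = v) = img := by
          ext p
          rw [Finset.mem_filter, hO', Finset.mem_union]
          constructor
          · rintro ⟨hp | hp, h2⟩
            · exact absurd h2 (hOsnd p hp)
            · exact hp
          · intro hp
            exact ⟨Or.inr hp, (((himgmem p).mp hp).2 : p.2 = v)⟩
        have himgcard : img.card = S.card := by
          rw [himg]
          exact Finset.card_image_of_injective S (fun a b hab => (Prod.mk.injEq _ _ _ _ ▸ hab).1)
        unfold indeg
        rw [hfilt, himgcard, hScard, Int.toNat_of_nonneg hci0]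
      · have hvW : v ∉ W := fun h' => hv (Finset.mem_erase.mpr ⟨hvi, h'⟩)
        have hfilt : O'.filter (fun p => p.2 = v) = O.filter (fun p => p.2 = v) := by
          ext p
          rw [Finset.mem_filter, Finset.mem_filter, hO', Finset.mem_union]
          constructor
          · rintro ⟨hp | hp, h2⟩
            · exact ⟨hp, h2⟩
            · exact absurd (h2.symm.trans ((himgmem p).mp hp).2) hvi
          · rintro ⟨hp, h2⟩
            exact ⟨Or.inl hp, h2⟩
        unfold indeg
        rw [hfilt]
        exact hindeg v hvW

/-- The indegree sequences of acyclic partial orientations of `G` are exactly the parking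
functions of `G_•` with respect to the sink `v₀`. -/
theorem indeg_acyclic_eq_parking (G : SimpleGraph V) :
    {c : V → ℤ | ∃ O : Finset (V × V), IsAcyclicPO G O ∧ ∀ v : V, c v = indeg O v} =
      {c : V → ℤ | IsPF G c} := by
  ext c
  simp only [Set.mem_setOf_eq]
  constructor
  · rintro ⟨O, hO, hc⟩
    exact indeg_isPF G O hO c hc
  · intro hc
    obtain ⟨O, r, hPO, hsteps, hindeg⟩ := build G c hc Finset.univ.card Finset.univ rfl
      ⟨∅, fun _ => 0, fun p hp => absurd hp (Finset.notMem_empty p),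
        fun p hp => absurd hp (Finset.notMem_empty p),
        fun v hv => absurd (Finset.mem_univ v) hv⟩
    refine ⟨O, ⟨hPO, ?_⟩, hindeg⟩
    rintro ⟨k, cy, hk, hcyinj, hcymem⟩
    -- a directed cycle would give a strictly increasing `r` around a cycle
    have hmono : ∀ i : Fin (k + 1), r (cy 0) + i.val ≤ r (cy i) := by
      intro i
      induction i using Fin.induction with
      | zero => simp
      | succ j ih =>
        have h1 := hsteps _ (hcymem j.castSucc)
        rw [Fin.coeSucc_eq_succ] at h1
        dsimp only at h1
        simp only [Fin.coe_castSucc] at ih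
        simp only [Fin.val_succ]
        omega
    have hlast := hsteps _ (hcymem (Fin.last k))
    rw [Fin.last_add_one] at hlast
    dsimp only at hlast
    have := hmono (Fin.last k)
    simp only [Fin.val_last] at this
    omega
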